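/- For all real numbers s with 0 < s < 1/2 and all x, y > 2s, one has α(x-2s, y-2s) ≤ α(x,y) · (xy/((x-2s)(y-2s))) · (xy/((x+y+1)(x+y)))^{-2s}. -/

import Mathlib

open MeasureTheory
open scoped ENNReal NNReal

/-- `α(x,y) = ∫₀¹ t^{x-1} (1-t)^{y-1} dt`. -/
noncomputable def alpha (x y : ℝ) : ℝ :=
  ∫ t in (0:ℝ)..1, t ^ (x - 1) * (1 - t) ^ (y - 1)

lemma alpha_eq_Gamma {u v : ℝ} (hu : 0 < u) (hv : 0 < v) :
    alpha u v = Real.Gamma u * Real.Gamma v / Real.Gamma (u + v) := by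
  have key : Complex.betaIntegral u v = ((alpha u v : ℝ) : ℂ) := by
    rw [alpha, Complex.betaIntegral, ← intervalIntegral.integral_ofReal]
    apply intervalIntegral.integral_congr
    intro t ht
    rw [Set.uIcc_of_le zero_le_one] at ht
    have h0 : (0:ℝ) ≤ t := ht.1
    have h1 : (0:ℝ) ≤ 1 - t := by linarith [ht.2]
    show (t:ℂ) ^ ((u:ℂ) - 1) * ((1:ℂ) - (t:ℝ)) ^ ((v:ℂ) - 1)
        = ((t ^ (u - 1) * (1 - t) ^ (v - 1) : ℝ) : ℂ)
    rw [show ((u:ℂ) - 1) = ((u - 1 : ℝ) : ℂ) by push_cast; ring,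
      show ((v:ℂ) - 1) = ((v - 1 : ℝ) : ℂ) by push_cast; ring,
      show ((1:ℂ) - (t:ℝ)) = ((1 - t : ℝ) : ℂ) by push_cast; ring,
      ← Complex.ofReal_cpow h0, ← Complex.ofReal_cpow h1, ← Complex.ofReal_mul]
  have hG := Complex.Gamma_mul_Gamma_eq_betaIntegral
    (s := (u:ℂ)) (t := (v:ℂ)) (by simpa using hu) (by simpa using hv)
  rw [key, show ((u:ℂ) + (v:ℂ)) = ((u + v : ℝ) : ℂ) by push_cast; ring,
    Complex.Gamma_ofReal, Complex.Gamma_ofReal, Complex.Gamma_ofReal,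
    ← Complex.ofReal_mul, ← Complex.ofReal_mul] at hG
  have hG' := Complex.ofReal_injective hG
  have hpos : 0 < Real.Gamma (u + v) := Real.Gamma_pos_of_pos (by linarith)
  field_simp
  linarith [hG']

lemma alpha_pos {u v : ℝ} (hu : 0 < u) (hv : 0 < v) : 0 < alpha u v := by
  rw [alpha_eq_Gamma hu hv]
  have h1 := Real.Gamma_pos_of_pos hu
  have h2 := Real.Gamma_pos_of_pos hv
  have h3 := Real.Gamma_pos_of_pos (show (0:ℝ) < u + v by linarith)
  positivity

lemma alpha_succ {u v : ℝ} (hu : 0 < u) (hv : 0 < v) :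
    alpha (u + 1) (v + 1) = (u * v / ((u + v) * (u + v + 1))) * alpha u v := by
  have huv : (0:ℝ) < u + v := by linarith
  rw [alpha_eq_Gamma (by linarith) (by linarith), alpha_eq_Gamma hu hv,
    Real.Gamma_add_one hu.ne', Real.Gamma_add_one hv.ne',
    show u + 1 + (v + 1) = (u + v + 1) + 1 by ring,
    Real.Gamma_add_one (by positivity : (u+v+1:ℝ) ≠ 0), Real.Gamma_add_one huv.ne']
  have h3 := (Real.Gamma_pos_of_pos huv).ne'
  field_simp

noncomputable def betaL (u v : ℝ) : ℝ≥0∞ :=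
  ∫⁻ t in Set.Ioo (0:ℝ) 1, ENNReal.ofReal (t ^ (u - 1) * (1 - t) ^ (v - 1))

lemma beta_measurable (u v : ℝ) :
    Measurable fun t : ℝ => t ^ (u - 1) * (1 - t) ^ (v - 1) :=
  (measurable_id.pow_const _).mul ((measurable_const.sub measurable_id).pow_const _)

lemma alpha_eq_toReal (u v : ℝ) : alpha u v = (betaL u v).toReal := by
  rw [alpha, intervalIntegral.integral_of_le zero_le_one,
    MeasureTheory.integral_Ioc_eq_integral_Ioo, betaL,
    integral_eq_lintegral_of_nonneg_ae ?_ ((beta_measurable u v).aestronglyMeasurable)]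
  filter_upwards [ae_restrict_mem measurableSet_Ioo] with t ht
  have h0 : 0 < t := ht.1
  have h1 : (0:ℝ) ≤ 1 - t := by linarith [ht.2]
  positivity

lemma betaL_lt_top {u v : ℝ} (hu : 0 < u) (hv : 0 < v) : betaL u v < ⊤ := by
  refine Integrable.lintegral_lt_top ?_
  have h := (Complex.betaIntegral_convergent (u := u) (v := v)
    (by simpa using hu) (by simpa using hv)).1
  have h2 : IntegrableOn (fun x : ℝ => (x:ℂ) ^ ((u:ℂ) - 1) * ((1:ℂ) - x) ^ ((v:ℂ) - 1))
      (Set.Ioo 0 1) := h.mono_set Set.Ioo_subset_Ioc_self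
  refine MeasureTheory.IntegrableOn.congr_fun h2.re ?_ measurableSet_Ioo
  intro t ht
  have h0 : (0:ℝ) ≤ t := ht.1.le
  have h1 : (0:ℝ) ≤ 1 - t := by linarith [ht.2]
  show ((t:ℂ) ^ ((u:ℂ) - 1) * ((1:ℂ) - (t:ℝ)) ^ ((v:ℂ) - 1)).re
      = t ^ (u - 1) * (1 - t) ^ (v - 1)
  rw [show ((u:ℂ) - 1) = ((u - 1 : ℝ) : ℂ) by push_cast; ring,
    show ((v:ℂ) - 1) = ((v - 1 : ℝ) : ℂ) by push_cast; ring,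
    show ((1:ℂ) - (t:ℝ)) = ((1 - t : ℝ) : ℂ) by push_cast; ring,
    ← Complex.ofReal_cpow h0, ← Complex.ofReal_cpow h1, ← Complex.ofReal_mul,
    Complex.ofReal_re]

lemma betaL_holder {a b σ : ℝ} (hσ0 : 0 < σ) (hσ1 : σ < 1) :
    betaL (a - σ) (b - σ) ≤ betaL a b ^ (1 - σ) * betaL (a - 1) (b - 1) ^ σ := by
  have hθ : 0 < 1 - σ := by linarith
  set μ := volume.restrict (Set.Ioo (0:ℝ) 1) with hμ
  set F : ℝ → ℝ≥0∞ := fun t => ENNReal.ofReal (t ^ (a - 1) * (1 - t) ^ (b - 1)) with hF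
  set G : ℝ → ℝ≥0∞ := fun t => ENNReal.ofReal (t ^ (a - 1 - 1) * (1 - t) ^ (b - 1 - 1)) with hG
  have hpq : Real.HolderConjugate (1 / (1 - σ)) (1 / σ) := by
    constructor
    · rw [one_div, inv_inv, one_div, inv_inv]; ring
    · positivity
    · positivity
  have hFm : AEMeasurable (fun t => F t ^ (1 - σ)) μ :=
    ((beta_measurable a b).ennreal_ofReal.pow_const _).aemeasurable
  have hGm : AEMeasurable (fun t => G t ^ σ) μ :=
    ((beta_measurable (a - 1) (b - 1)).ennreal_ofReal.pow_const _).aemeasurable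
  have key := ENNReal.lintegral_mul_le_Lp_mul_Lq μ hpq hFm hGm
  have e1 : ∀ t : ℝ, (F t ^ (1 - σ)) ^ (1 / (1 - σ)) = F t := fun t => by
    rw [← ENNReal.rpow_mul, mul_one_div_cancel hθ.ne', ENNReal.rpow_one]
  have e2 : ∀ t : ℝ, (G t ^ σ) ^ (1 / σ) = G t := fun t => by
    rw [← ENNReal.rpow_mul, mul_one_div_cancel hσ0.ne', ENNReal.rpow_one]
  simp only [Pi.mul_apply, e1, e2, one_div_one_div] at key
  refine le_trans (le_of_eq ?_) key
  refine setLIntegral_congr_fun measurableSet_Ioo (fun t ht => ?_)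
  have ht0 : 0 < t := ht.1
  have ht1 : 0 < 1 - t := by linarith [ht.2]
  show ENNReal.ofReal (t ^ (a - σ - 1) * (1 - t) ^ (b - σ - 1))
      = ENNReal.ofReal (t ^ (a - 1) * (1 - t) ^ (b - 1)) ^ (1 - σ) *
        ENNReal.ofReal (t ^ (a - 1 - 1) * (1 - t) ^ (b - 1 - 1)) ^ σ
  rw [ENNReal.ofReal_rpow_of_pos (by positivity), ENNReal.ofReal_rpow_of_pos (by positivity),
    ← ENNReal.ofReal_mul (by positivity)]
  congr 1
  rw [Real.mul_rpow (by positivity) (by positivity), Real.mul_rpow (by positivity) (by positivity),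
    ← Real.rpow_mul ht0.le, ← Real.rpow_mul ht1.le,
    ← Real.rpow_mul ht0.le, ← Real.rpow_mul ht1.le,
    show t ^ ((a - 1) * (1 - σ)) * (1 - t) ^ ((b - 1) * (1 - σ)) *
        (t ^ ((a - 1 - 1) * σ) * (1 - t) ^ ((b - 1 - 1) * σ))
      = t ^ ((a - 1) * (1 - σ)) * t ^ ((a - 1 - 1) * σ) *
        ((1 - t) ^ ((b - 1) * (1 - σ)) * (1 - t) ^ ((b - 1 - 1) * σ)) by ring,
    ← Real.rpow_add ht0, ← Real.rpow_add ht1,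
    show (a - 1) * (1 - σ) + (a - 1 - 1) * σ = a - σ - 1 by ring,
    show (b - 1) * (1 - σ) + (b - 1 - 1) * σ = b - σ - 1 by ring]

lemma alpha_holder {a b σ : ℝ} (hσ0 : 0 < σ) (hσ1 : σ < 1) (ha : 1 < a) (hb : 1 < b) :
    alpha (a - σ) (b - σ) ≤ alpha a b ^ (1 - σ) * alpha (a - 1) (b - 1) ^ σ := by
  have h1 := betaL_holder (a := a) (b := b) hσ0 hσ1
  have hfin1 : betaL a b ≠ ⊤ := (betaL_lt_top (by linarith) (by linarith)).ne
  have hfin2 : betaL (a - 1) (b - 1) ≠ ⊤ := (betaL_lt_top (by linarith) (by linarith)).ne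
  rw [alpha_eq_toReal, alpha_eq_toReal, alpha_eq_toReal]
  calc (betaL (a - σ) (b - σ)).toReal
      ≤ ((betaL a b) ^ (1 - σ) * (betaL (a - 1) (b - 1)) ^ σ).toReal := by
        apply ENNReal.toReal_mono ?_ h1
        exact ENNReal.mul_ne_top (ENNReal.rpow_ne_top_of_nonneg (by linarith) hfin1)
          (ENNReal.rpow_ne_top_of_nonneg hσ0.le hfin2)
    _ = _ := by rw [ENNReal.toReal_mul, ← ENNReal.toReal_rpow, ← ENNReal.toReal_rpow]

theorem alpha_negative_upper_bound (x y s : ℝ) (hs0 : 0 < s) (hs : s < 1 / 2)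
    (hx : 2 * s < x) (hy : 2 * s < y) :
    alpha (x - 2 * s) (y - 2 * s) ≤
      alpha x y * (x * y / ((x - 2 * s) * (y - 2 * s))) *
        (x * y / ((x + y + 1) * (x + y))) ^ (-(2 * s)) := by
  have hx0 : 0 < x := by linarith
  have hy0 : 0 < y := by linarith
  have hu : 0 < x - 2 * s := by linarith
  have hv : 0 < y - 2 * s := by linarith
  have hs2 : 0 < 2 * s := by linarith
  have hs2' : 2 * s < 1 := by linarith
  have hA : 0 < alpha x y := alpha_pos hx0 hy0
  set R : ℝ := x * y / ((x + y + 1) * (x + y)) with hRdef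
  have hR : 0 < R := by positivity
  set E : ℝ := R ^ (-(2 * s)) with hEdef
  have hE : 0 < E := Real.rpow_pos_of_pos hR _
  set P : ℝ := (x - 2 * s + (y - 2 * s)) * (x - 2 * s + (y - 2 * s) + 1) with hPdef
  have hP : 0 < P := by positivity
  -- step 1: recurrence for the shifted parameters
  have h1 : alpha (x - 2 * s) (y - 2 * s)
      = P / ((x - 2 * s) * (y - 2 * s)) * alpha (x - 2 * s + 1) (y - 2 * s + 1) := by
    rw [alpha_succ hu hv, hPdef]
    field_simp
  -- step 2: Hölder
  have h2 : alpha (x - 2 * s + 1) (y - 2 * s + 1)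
      ≤ alpha (x + 1) (y + 1) ^ (1 - 2 * s) * alpha x y ^ (2 * s) := by
    have h := alpha_holder (a := x + 1) (b := y + 1) hs2 hs2'
      (by linarith) (by linarith)
    rw [show x + 1 - 1 = x by ring, show y + 1 - 1 = y by ring,
      show x + 1 - 2 * s = x - 2 * s + 1 by ring,
      show y + 1 - 2 * s = y - 2 * s + 1 by ring] at h
    exact h
  -- step 3: recurrence at (x, y)
  have h3 : alpha (x + 1) (y + 1) = R * alpha x y := by
    rw [alpha_succ hx0 hy0, hRdef, show (x + y) * (x + y + 1) = (x + y + 1) * (x + y) by ring]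
  -- combine
  have h4 : alpha (x - 2 * s) (y - 2 * s)
      ≤ P / ((x - 2 * s) * (y - 2 * s)) * ((R * alpha x y) ^ (1 - 2 * s) * alpha x y ^ (2 * s)) := by
    rw [h1, ← h3]
    exact mul_le_mul_of_nonneg_left h2 (by positivity)
  have h5 : (R * alpha x y) ^ (1 - 2 * s) * alpha x y ^ (2 * s) = R * E * alpha x y := by
    rw [Real.mul_rpow hR.le hA.le, mul_assoc, ← Real.rpow_add hA,
      show 1 - 2 * s + 2 * s = 1 by ring, Real.rpow_one, hEdef,
      show (1 - 2 * s : ℝ) = 1 + -(2 * s) by ring, Real.rpow_add hR, Real.rpow_one]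
  rw [h5] at h4
  refine h4.trans ?_
  -- final algebraic comparison
  have hkey : P * R ≤ x * y := by
    have hP' : P ≤ (x + y) * (x + y + 1) := by nlinarith
    calc P * R ≤ (x + y) * (x + y + 1) * R := mul_le_mul_of_nonneg_right hP' hR.le
      _ = x * y := by
          rw [hRdef]
          field_simp
  calc P / ((x - 2 * s) * (y - 2 * s)) * (R * E * alpha x y)
      = (P * R) * (alpha x y * E / ((x - 2 * s) * (y - 2 * s))) := by ring
    _ ≤ (x * y) * (alpha x y * E / ((x - 2 * s) * (y - 2 * s))) :=
        mul_le_mul_of_nonneg_right hkey (by positivity)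
    _ = alpha x y * (x * y / ((x - 2 * s) * (y - 2 * s))) * E := by ring
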